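/- arXiv:1911.09944 — 2 statements merged into one kernel-verified Lean document; each statement's English description precedes it below -/
import Mathlib

section
/- For every integer q ≥ 2 and every n ≥ 1, there exist nonnegative integers n1, n2 with n1 + n2 + 1 = n and a set S ⊆ Σ_q^{n1} such that, setting T = {y ∈ Σ_q^{n1+1} : no s ∈ S is a subsequence of y}, one has |S| + 7·|T| / V_I^q(n2,1) ≤ 7·q^{n1+1} / V_I^q(n,1). -/
open scoped Classical

/-- The finset of all words of length `n` over the alphabet `Fin q`. -/
def allWords (q n : ℕ) : Finset (List (Fin q)) :=
  (Finset.univ : Finset (Fin n → Fin q)).image List.ofFn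

lemma mem_allWords {q n : ℕ} {x : List (Fin q)} : x ∈ allWords q n ↔ x.length = n := by
  constructor
  · rintro hx
    simp only [allWords, Finset.mem_image] at hx
    obtain ⟨f, _, rfl⟩ := hx
    simp
  · rintro rfl
    simp only [allWords, Finset.mem_image]
    exact ⟨fun i => x[(i : ℕ)], Finset.mem_univ _, List.ofFn_getElem⟩

lemma card_allWords (q n : ℕ) : (allWords q n).card = q ^ n := by
  rw [allWords, Finset.card_image_of_injective _ List.ofFn_injective]
  simp

lemma allWords_succ_eq (q m : ℕ) :
    allWords q (m + 1) =
      ((Finset.univ : Finset (Fin q)) ×ˢ allWords q m).image (fun p => p.1 :: p.2) := by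
  ext y
  simp only [Finset.mem_image, Finset.mem_product, Finset.mem_univ, true_and, mem_allWords,
    Prod.exists]
  constructor
  · intro hy
    match y, hy with
    | a :: w, hy => exact ⟨a, w, by simpa using hy, rfl⟩
  · rintro ⟨a, w, hw, rfl⟩
    simp [hw]

/-- number of descents (adjacent unequal pairs) -/
def dsc {q : ℕ} : List (Fin q) → ℕ
  | [] => 0
  | [_] => 0
  | (a :: b :: t) => (if a = b then 0 else 1) + dsc (b :: t)

lemma sum_pow_dsc (q : ℕ) (hq : 1 ≤ q) (z : ℝ) :
    ∀ m : ℕ, (∑ y ∈ allWords q (m + 1), z ^ dsc y) = q * (1 + (q - 1) * z) ^ m := by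
  intro m
  induction m with
  | zero =>
    rw [allWords_succ_eq]
    rw [Finset.sum_image (by rintro ⟨a, w⟩ - ⟨b, v⟩ - h; simpa using h)]
    have h0 : allWords q 0 = {([] : List (Fin q))} := by
      ext x; simp [mem_allWords, List.length_eq_zero_iff]
    simp [h0, dsc]
  | succ m ih =>
    rw [allWords_succ_eq]
    rw [Finset.sum_image (by rintro ⟨a, w⟩ - ⟨b, v⟩ - h; simpa using h)]
    rw [Finset.sum_product, Finset.sum_comm]
    have key : ∀ w ∈ allWords q (m + 1),
        (∑ a : Fin q, z ^ dsc (a :: w)) = (1 + (q - 1) * z) * z ^ dsc w := by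
      intro w hw
      rw [mem_allWords] at hw
      match w with
      | b :: t =>
        have hd : ∀ a : Fin q, dsc (a :: b :: t) = (if a = b then 0 else 1) + dsc (b :: t) :=
          fun a => rfl
        have : (∑ a : Fin q, z ^ dsc (a :: b :: t))
            = ∑ a : Fin q, (if a = b then z ^ dsc (b :: t) else z * z ^ dsc (b :: t)) := by
          refine Finset.sum_congr rfl fun a _ => ?_
          rw [hd a]
          by_cases h : a = b <;> simp [h, pow_add, pow_succ, mul_comm]
        rw [this, Finset.sum_ite]
        have h1 : (Finset.univ.filter (fun a : Fin q => a = b)).card = 1 := by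
          simp [Finset.filter_eq']
        have h2 : (Finset.univ.filter (fun a : Fin q => ¬ a = b)).card = q - 1 := by
          rw [Finset.filter_not, Finset.card_sdiff_of_subset (Finset.filter_subset _ _)]
          simp [Finset.filter_eq']
        rw [Finset.sum_const, Finset.sum_const, h1, h2]
        have hc : ((q - 1 : ℕ) : ℝ) = (q : ℝ) - 1 := by
          have : (1 : ℕ) ≤ q := hq
          push_cast [this]; ring
        simp only [one_smul, nsmul_eq_mul, hc]
        ring
    rw [Finset.sum_congr rfl key, ← Finset.mul_sum, ih]
    ring

/-- the set of length-(|y|-1) subwords of y -/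
noncomputable def Del {q : ℕ} (y : List (Fin q)) : Finset (List (Fin q)) :=
  (allWords q (y.length - 1)).filter (fun s => s.Sublist y)

lemma card_del (q : ℕ) :
    ∀ (w : List (Fin q)) (a : Fin q), 1 + dsc (a :: w) ≤ (Del (a :: w)).card := by
  intro w
  induction w with
  | nil =>
    intro a
    have h1 : ([] : List (Fin q)) ∈ Del [a] := by
      simp [Del, mem_allWords]
    have := Finset.card_pos.mpr ⟨[], h1⟩
    simpa [dsc] using this
  | cons b t ih =>
    intro a
    have hinj : Function.Injective (fun z : List (Fin q) => a :: z) := by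
      intro x y h; simpa using h
    have himg : (Del (b :: t)).image (fun z => a :: z) ⊆ Del (a :: b :: t) := by
      intro z hz
      simp only [Finset.mem_image] at hz
      obtain ⟨u, hu, rfl⟩ := hz
      simp only [Del, Finset.mem_filter, mem_allWords, List.length_cons] at hu ⊢
      exact ⟨by omega, List.cons_sublist_cons.mpr hu.2⟩
    have hcard_img : ((Del (b :: t)).image (fun z => a :: z)).card = (Del (b :: t)).card :=
      Finset.card_image_of_injective _ hinj
    by_cases hab : a = b
    · subst hab
      have hd : dsc (a :: a :: t) = dsc (a :: t) := by simp [dsc]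
      calc 1 + dsc (a :: a :: t) = 1 + dsc (a :: t) := by rw [hd]
        _ ≤ (Del (a :: t)).card := ih a
        _ = ((Del (a :: t)).image (fun z => a :: z)).card := hcard_img.symm
        _ ≤ (Del (a :: a :: t)).card := Finset.card_le_card himg
    · have hw : (b :: t) ∈ Del (a :: b :: t) := by
        simp only [Del, Finset.mem_filter, mem_allWords, List.length_cons]
        exact ⟨by omega, List.sublist_cons_self _ _⟩
      have hnot : (b :: t) ∉ (Del (b :: t)).image (fun z => a :: z) := by
        simp only [Finset.mem_image]
        rintro ⟨u, -, h⟩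
        have h' : a :: u = b :: t := h
        exact hab ((List.cons.injEq _ _ _ _).mp h').1
      have hins : insert (b :: t) ((Del (b :: t)).image (fun z => a :: z))
          ⊆ Del (a :: b :: t) :=
        Finset.insert_subset hw himg
      have hd : dsc (a :: b :: t) = 1 + dsc (b :: t) := by simp [dsc, hab]
      calc 1 + dsc (a :: b :: t) = 1 + (1 + dsc (b :: t)) := by rw [hd]
        _ ≤ 1 + (Del (b :: t)).card := by have := ih b; omega
        _ = (insert (b :: t) ((Del (b :: t)).image (fun z => a :: z))).card := by
            rw [Finset.card_insert_of_notMem hnot, hcard_img]; omega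
        _ ≤ (Del (a :: b :: t)).card := Finset.card_le_card hins

section Wgt

variable {α : Type*} [DecidableEq α]

noncomputable def wgt (p : ℝ) (U S : Finset α) : ℝ := p ^ S.card * (1 - p) ^ (U \ S).card

lemma wgt_insert_left (p : ℝ) {U : Finset α} {a : α} (ha : a ∉ U) {S : Finset α}
    (hS : S ⊆ U) : wgt p (insert a U) S = (1 - p) * wgt p U S := by
  have h1 : insert a U \ S = insert a (U \ S) := by
    ext x; simp only [Finset.mem_sdiff, Finset.mem_insert]; constructor
    · rintro ⟨h | h, h2⟩; exacts [Or.inl h, Or.inr ⟨h, h2⟩]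
    · rintro (rfl | ⟨h, h2⟩)
      · exact ⟨Or.inl rfl, fun hx => ha (hS hx)⟩
      · exact ⟨Or.inr h, h2⟩
  have h2 : a ∉ U \ S := fun hx => ha (Finset.mem_sdiff.mp hx).1
  rw [wgt, wgt, h1, Finset.card_insert_of_notMem h2, pow_succ]
  ring

lemma wgt_insert_both (p : ℝ) {U : Finset α} {a : α} (ha : a ∉ U) {S : Finset α}
    (hS : S ⊆ U) : wgt p (insert a U) (insert a S) = p * wgt p U S := by
  have haS : a ∉ S := fun hx => ha (hS hx)
  have h1 : insert a U \ insert a S = U \ S := by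
    ext x; simp only [Finset.mem_sdiff, Finset.mem_insert, not_or]; constructor
    · rintro ⟨h | h, h2, h3⟩
      · exact absurd h h2
      · exact ⟨h, h3⟩
    · rintro ⟨h, h2⟩
      exact ⟨Or.inr h, fun hx => ha (hx ▸ h), h2⟩
  rw [wgt, wgt, h1, Finset.card_insert_of_notMem haS, pow_succ]
  ring

lemma sum_wgt (p : ℝ) (U : Finset α) : ∑ S ∈ U.powerset, wgt p U S = 1 := by
  induction U using Finset.induction_on with
  | empty => simp [wgt]
  | @insert a U ha ih =>
    rw [Finset.sum_powerset_insert ha]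
    have e1 : ∀ S ∈ U.powerset, wgt p (insert a U) S = (1 - p) * wgt p U S := fun S hS =>
      wgt_insert_left p ha (Finset.mem_powerset.mp hS)
    have e2 : ∀ S ∈ U.powerset, wgt p (insert a U) (insert a S) = p * wgt p U S := fun S hS =>
      wgt_insert_both p ha (Finset.mem_powerset.mp hS)
    rw [Finset.sum_congr rfl e1, Finset.sum_congr rfl e2, ← Finset.mul_sum, ← Finset.mul_sum, ih]
    ring

lemma sum_wgt_card (p : ℝ) (U : Finset α) :
    ∑ S ∈ U.powerset, wgt p U S * S.card = p * U.card := by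
  induction U using Finset.induction_on with
  | empty => simp [wgt]
  | @insert a U ha ih =>
    rw [Finset.sum_powerset_insert ha]
    have e1 : ∀ S ∈ U.powerset, wgt p (insert a U) S * S.card
        = (1 - p) * (wgt p U S * S.card) := fun S hS => by
      rw [wgt_insert_left p ha (Finset.mem_powerset.mp hS)]; ring
    have e2 : ∀ S ∈ U.powerset, wgt p (insert a U) (insert a S) * (insert a S).card
        = p * (wgt p U S * S.card) + p * wgt p U S := fun S hS => by
      have haS : a ∉ S := fun hx => ha (Finset.mem_powerset.mp hS hx)
      rw [wgt_insert_both p ha (Finset.mem_powerset.mp hS),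
        Finset.card_insert_of_notMem haS]
      push_cast
      ring
    rw [Finset.sum_congr rfl e1, Finset.sum_congr rfl e2, Finset.sum_add_distrib,
      ← Finset.mul_sum, ← Finset.mul_sum, ← Finset.mul_sum, ih, sum_wgt,
      Finset.card_insert_of_notMem ha]
    push_cast
    ring

lemma sum_wgt_disj (p : ℝ) (U : Finset α) (D : Finset α) :
    ∑ S ∈ U.powerset, wgt p U S * (if Disjoint S D then 1 else 0)
      = (1 - p) ^ (U ∩ D).card := by
  induction U using Finset.induction_on with
  | empty => simp [wgt]
  | @insert a U ha ih =>
    rw [Finset.sum_powerset_insert ha]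
    have e1 : ∀ S ∈ U.powerset, wgt p (insert a U) S * (if Disjoint S D then 1 else 0)
        = (1 - p) * (wgt p U S * (if Disjoint S D then 1 else 0)) := fun S hS => by
      rw [wgt_insert_left p ha (Finset.mem_powerset.mp hS)]; ring
    rw [Finset.sum_congr rfl e1, ← Finset.mul_sum]
    by_cases haD : a ∈ D
    · have e2 : ∀ S ∈ U.powerset,
          wgt p (insert a U) (insert a S) * (if Disjoint (insert a S) D then 1 else 0) = 0 := by
        intro S hS
        have : ¬ Disjoint (insert a S) D := fun h =>
          (Finset.disjoint_left.mp h (Finset.mem_insert_self a S)) haD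
        rw [if_neg this, mul_zero]
      rw [Finset.sum_congr rfl e2, Finset.sum_const, smul_zero, add_zero, ih]
      have heq : insert a U ∩ D = insert a (U ∩ D) := by
        ext x; simp only [Finset.mem_inter, Finset.mem_insert]
        constructor
        · rintro ⟨rfl | h, h2⟩; exacts [Or.inl rfl, Or.inr ⟨h, h2⟩]
        · rintro (rfl | ⟨h, h2⟩); exacts [⟨Or.inl rfl, haD⟩, ⟨Or.inr h, h2⟩]
      have hna : a ∉ U ∩ D := fun hx => ha (Finset.mem_inter.mp hx).1
      rw [heq, Finset.card_insert_of_notMem hna, pow_succ]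
      ring
    · have e2 : ∀ S ∈ U.powerset,
          wgt p (insert a U) (insert a S) * (if Disjoint (insert a S) D then 1 else 0)
          = p * (wgt p U S * (if Disjoint S D then 1 else 0)) := by
        intro S hS
        have hiff : Disjoint (insert a S) D ↔ Disjoint S D := by
          rw [Finset.insert_eq, Finset.disjoint_union_left]
          simp [Finset.disjoint_left, haD]
        rw [wgt_insert_both p ha (Finset.mem_powerset.mp hS), if_congr hiff rfl rfl]
        ring
      rw [Finset.sum_congr rfl e2, ← Finset.mul_sum, ih]
      have heq : insert a U ∩ D = U ∩ D := by
        ext x; simp only [Finset.mem_inter, Finset.mem_insert]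
        constructor
        · rintro ⟨rfl | h, h2⟩; exacts [absurd h2 haD, ⟨h, h2⟩]
        · rintro ⟨h, h2⟩; exact ⟨Or.inr h, h2⟩
      rw [heq]
      ring

end Wgt

lemma claimC (n : ℕ) (hn : 7 ≤ n) :
    (1 - 5 / ((n : ℝ) + 1)) ^ ((n - 1) / 2) ≤ 1 / 9 := by
  rcases le_or_gt n 28 with h28 | h28
  · interval_cases n <;> norm_num
  · set k : ℕ := (n - 1) / 2 with hk
    have hu0 : (0 : ℝ) < (n : ℝ) + 1 := by positivity
    have hu1 : (1 : ℝ) - 5 / ((n : ℝ) + 1) ≥ 0 := by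
      rw [ge_iff_le, sub_nonneg, div_le_one hu0]
      have : (7 : ℝ) ≤ (n : ℝ) := by exact_mod_cast hn
      linarith
    have h2 : (1 : ℝ) - 5 / ((n : ℝ) + 1) ≤ Real.exp (-(5 / ((n : ℝ) + 1))) := by
      have := Real.add_one_le_exp (-(5 / ((n : ℝ) + 1)))
      linarith
    have h3 : (1 - 5 / ((n : ℝ) + 1)) ^ k ≤ Real.exp (-(5 / ((n : ℝ) + 1))) ^ k :=
      pow_le_pow_left₀ hu1 h2 k
    have h4 : Real.exp (-(5 / ((n : ℝ) + 1))) ^ k = Real.exp ((k : ℝ) * -(5 / ((n : ℝ) + 1))) :=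
      (Real.exp_nat_mul _ k).symm
    have hkn : 9 * (n + 1) ≤ 20 * k := by omega
    have hkn' : (9 : ℝ) * ((n : ℝ) + 1) ≤ 20 * (k : ℝ) := by exact_mod_cast hkn
    have h5' : (9 / 4 : ℝ) ≤ (k : ℝ) * (5 / ((n : ℝ) + 1)) := by
      have e : (k : ℝ) * (5 / ((n : ℝ) + 1)) = (5 * (k : ℝ)) / ((n : ℝ) + 1) := by ring
      rw [e, le_div_iff₀ hu0]
      linarith
    have h5 : (k : ℝ) * -(5 / ((n : ℝ) + 1)) ≤ -(9 / 4) := by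
      rw [mul_neg]
      exact neg_le_neg h5'
    have h9 : (9 : ℝ) ≤ Real.exp (9 / 4) := by
      have e2 : Real.exp (9 / 4 : ℝ) = Real.exp 1 ^ (2 : ℕ) * Real.exp (1 / 4) := by
        rw [← Real.exp_nat_mul, ← Real.exp_add]; norm_num
      have l1 : (2.7182818283 : ℝ) < Real.exp 1 := Real.exp_one_gt_d9
      have l2 : (1.25 : ℝ) ≤ Real.exp (1 / 4) := by
        have := Real.add_one_le_exp (1 / 4 : ℝ); linarith
      rw [e2]
      nlinarith [Real.exp_pos 1, Real.exp_pos (1/4 : ℝ)]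
    have h7 : Real.exp (-(9 / 4 : ℝ)) ≤ 1 / 9 := by
      rw [Real.exp_neg, one_div]
      exact inv_anti₀ (by norm_num) h9
    calc (1 - 5 / ((n : ℝ) + 1)) ^ k ≤ Real.exp ((k : ℝ) * -(5 / ((n : ℝ) + 1))) := by
          rw [← h4]; exact h3
      _ ≤ Real.exp (-(9 / 4)) := Real.exp_le_exp.mpr h5
      _ ≤ 1 / 9 := h7

lemma scalar_ineq (qr A M N : ℝ) (hq : 2 ≤ qr) (hA : 7 * qr ≤ A) (hA14 : 14 ≤ A)
    (hN : N = A + 1) (hM : 0 < M) (hNM : N ≤ 2 * M) :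
    5 * qr / A + 7 * qr / (9 * M) ≤ 7 * qr / N := by
  have hA0 : (0 : ℝ) < A := by linarith
  have hN0 : (0 : ℝ) < N := by linarith
  have hq0 : (0 : ℝ) < qr := by linarith
  have t1 : 7 * qr / (9 * M) ≤ 14 * qr / (9 * N) := by
    rw [div_le_div_iff₀ (by positivity) (by positivity)]
    nlinarith
  have t2 : 5 * qr / A ≤ 49 * qr / (9 * N) := by
    rw [div_le_div_iff₀ (by positivity) (by positivity)]
    nlinarith
  have t3 : 49 * qr / (9 * N) + 14 * qr / (9 * N) = 7 * qr / N := by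
    field_simp
    ring
  linarith

set_option maxHeartbeats 2000000 in
/-- Existence of good almost-covering sets for a single insertion:
there are `n1, n2` with `n1+n2+1 = n` and a set `S ⊆ Σ_q^{n1}` such that,
with `T` the set of words of `Σ_q^{n1+1}` not covered by `S`,
`|S| + 7|T|/V_I^q(n2,1) ≤ 7 q^(n1+1)/V_I^q(n,1)`,
where `V_I^q(m,1) = (m+1)(q-1)+1`. -/
theorem exists_almost_covering_single_insertion (q n : ℕ) (hq : 2 ≤ q) (hn : 1 ≤ n) :
    ∃ n1 n2 : ℕ, n1 + n2 + 1 = n ∧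
      ∃ S : Finset (List (Fin q)),
        (∀ s ∈ S, s.length = n1) ∧
        (S.card : ℝ) +
          7 * (((allWords q (n1 + 1)).filter
              (fun y => ¬ ∃ s ∈ S, s.Sublist y)).card : ℝ) /
            (((n2 : ℝ) + 1) * ((q : ℝ) - 1) + 1)
          ≤ 7 * (q : ℝ) ^ (n1 + 1) / (((n : ℝ) + 1) * ((q : ℝ) - 1) + 1) := by
  have hq1 : 1 ≤ q := by omega
  have hqR : (2 : ℝ) ≤ (q : ℝ) := by exact_mod_cast hq
  have hnR : (1 : ℝ) ≤ (n : ℝ) := by exact_mod_cast hn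
  have hNpos : (0 : ℝ) < ((n : ℝ) + 1) * ((q : ℝ) - 1) + 1 := by nlinarith
  by_cases hreg : (n + 1) * (q - 1) + 1 ≤ 7 * q
  · -- small case : S = all words of length n-1
    refine ⟨n - 1, 0, by omega, allWords q (n - 1), fun s hs => mem_allWords.mp hs, ?_⟩
    have key : ∀ y ∈ allWords q ((n - 1) + 1), ¬ ¬ ∃ s ∈ allWords q (n - 1), s.Sublist y := by
      intro y hy
      refine not_not_intro ⟨y.tail, ?_, List.tail_sublist y⟩
      rw [mem_allWords] at hy ⊢
      rw [List.length_tail, hy]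
      omega
    rw [Finset.filter_false_of_mem key]
    have hN7 : ((n : ℝ) + 1) * ((q : ℝ) - 1) + 1 ≤ 7 * (q : ℝ) := by
      have := hreg
      have hc : (((n + 1) * (q - 1) + 1 : ℕ) : ℝ) = ((n : ℝ) + 1) * ((q : ℝ) - 1) + 1 := by
        push_cast [Nat.cast_sub hq1]
        ring
      calc ((n : ℝ) + 1) * ((q : ℝ) - 1) + 1 = (((n + 1) * (q - 1) + 1 : ℕ) : ℝ) := hc.symm
        _ ≤ ((7 * q : ℕ) : ℝ) := by exact_mod_cast hreg
        _ = 7 * (q : ℝ) := by push_cast; ring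
    simp only [Finset.card_empty, Nat.cast_zero, card_allWords]
    rw [mul_zero, zero_div, add_zero, le_div_iff₀ hNpos]
    have hpow : (0 : ℝ) < (q : ℝ) ^ (n - 1) := by positivity
    have : ((q ^ (n - 1) : ℕ) : ℝ) = (q : ℝ) ^ (n - 1) := by push_cast; ring
    rw [this, pow_succ]
    nlinarith
  · -- main case : random covering
    push_neg at hreg
    have hA' : 7 * q ≤ (n + 1) * (q - 1) := by omega
    have hn7 : 7 ≤ n := by
      have h1 : 7 * (q - 1) < (n + 1) * (q - 1) := by
        have : 7 * (q - 1) < 7 * q := by omega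
        omega
      have := Nat.lt_of_mul_lt_mul_right h1
      omega
    obtain ⟨k, hkdef⟩ : ∃ k : ℕ, k = (n - 1) / 2 := ⟨_, rfl⟩
    obtain ⟨n2, hn2def⟩ : ∃ n2 : ℕ, n2 = n - 1 - k := ⟨_, rfl⟩
    have hkn : k + n2 + 1 = n := by omega
    have h2nk : n + 1 ≤ 2 * (n2 + 1) := by omega
    -- real abbreviations
    obtain ⟨A, hAdef⟩ : ∃ A : ℝ, A = ((n : ℝ) + 1) * ((q : ℝ) - 1) := ⟨_, rfl⟩
    obtain ⟨N, hNdef⟩ : ∃ N : ℝ, N = ((n : ℝ) + 1) * ((q : ℝ) - 1) + 1 := ⟨_, rfl⟩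
    obtain ⟨M, hMdef⟩ : ∃ M : ℝ, M = ((n2 : ℝ) + 1) * ((q : ℝ) - 1) + 1 := ⟨_, rfl⟩
    rw [← hNdef] at hNpos
    have hAcast : (((n + 1) * (q - 1) : ℕ) : ℝ) = A := by
      rw [hAdef]; push_cast [Nat.cast_sub hq1]; ring
    have hA7 : 7 * (q : ℝ) ≤ A := by
      calc 7 * (q : ℝ) = ((7 * q : ℕ) : ℝ) := by push_cast; ring
        _ ≤ (((n + 1) * (q - 1) : ℕ) : ℝ) := by exact_mod_cast hA'
        _ = A := hAcast
    have hA14 : (14 : ℝ) ≤ A := by linarith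
    have hApos : (0 : ℝ) < A := by linarith
    have hMpos : (0 : ℝ) < M := by
      have h1 : (1 : ℝ) ≤ (q : ℝ) - 1 := by linarith
      have h2 : (0 : ℝ) ≤ (n2 : ℝ) := Nat.cast_nonneg _
      rw [hMdef]
      nlinarith
    have hNM : N ≤ 2 * M := by
      have h2 : ((n : ℝ) + 1) ≤ 2 * ((n2 : ℝ) + 1) := by exact_mod_cast h2nk
      have hq1R : (1 : ℝ) ≤ (q : ℝ) - 1 := by linarith
      rw [hNdef, hMdef]
      nlinarith
    obtain ⟨p, hpdef⟩ : ∃ p : ℝ, p = 5 * (q : ℝ) / A := ⟨_, rfl⟩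
    have hppos : 0 < p := by rw [hpdef]; positivity
    have hple : p ≤ 5 / 7 := by
      rw [hpdef, div_le_iff₀ hApos]
      nlinarith
    have h1p0 : (0 : ℝ) ≤ 1 - p := by linarith
    have h1p1 : 1 - p ≤ 1 := by linarith
    have h1ppos : (0 : ℝ) < 1 - p := by linarith
    obtain ⟨u, hudef⟩ : ∃ u : ℝ, u = 5 / ((n : ℝ) + 1) := ⟨_, rfl⟩
    have hqu : 1 + ((q : ℝ) - 1) * (1 - p) = (q : ℝ) * (1 - u) := by
      rw [hpdef, hudef, hAdef]
      have h1 : (q : ℝ) - 1 ≠ 0 := by linarith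
      have h2 : (n : ℝ) + 1 ≠ 0 := by linarith
      field_simp
      ring
    -- the expectation bound
    have hTsum : ∑ S ∈ (allWords q k).powerset,
        wgt p (allWords q k) S * (((allWords q (k + 1)).filter
          (fun y => ¬ ∃ s ∈ S, s.Sublist y)).card : ℝ)
        ≤ (1 - p) * ((q : ℝ) * (1 + ((q : ℝ) - 1) * (1 - p)) ^ k) := by
      have e1 : ∀ S ∈ (allWords q k).powerset,
          wgt p (allWords q k) S * (((allWords q (k + 1)).filter
            (fun y => ¬ ∃ s ∈ S, s.Sublist y)).card : ℝ)
          = ∑ y ∈ allWords q (k + 1),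
              wgt p (allWords q k) S * (if Disjoint S (Del y) then (1 : ℝ) else 0) := by
        intro S hS
        have hsub : S ⊆ allWords q k := Finset.mem_powerset.mp hS
        have hcount : (((allWords q (k + 1)).filter
            (fun y => ¬ ∃ s ∈ S, s.Sublist y)).card : ℝ)
            = ∑ y ∈ allWords q (k + 1), (if Disjoint S (Del y) then (1 : ℝ) else 0) := by
          rw [Finset.card_filter]
          push_cast
          refine Finset.sum_congr rfl fun y hy => ?_
          have hylen : y.length = k + 1 := mem_allWords.mp hy
          have hiff : (¬ ∃ s ∈ S, s.Sublist y) ↔ Disjoint S (Del y) := by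
            constructor
            · intro hno
              rw [Finset.disjoint_left]
              intro s hsS hsD
              exact hno ⟨s, hsS, (Finset.mem_filter.mp hsD).2⟩
            · intro hdis hex
              obtain ⟨s, hsS, hssub⟩ := hex
              have hslen : s.length = k := mem_allWords.mp (hsub hsS)
              have hmem : s ∈ Del y := by
                rw [Del]
                refine Finset.mem_filter.mpr ⟨mem_allWords.mpr ?_, hssub⟩
                rw [hylen]
                omega
              exact (Finset.disjoint_left.mp hdis hsS) hmem
          rw [if_congr hiff rfl rfl]
        rw [hcount, Finset.mul_sum]
      rw [Finset.sum_congr rfl e1, Finset.sum_comm]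
      have e2 : ∀ y ∈ allWords q (k + 1),
          (∑ S ∈ (allWords q k).powerset, wgt p (allWords q k) S * (if Disjoint S (Del y) then (1 : ℝ) else 0))
          ≤ (1 - p) * (1 - p) ^ dsc y := by
        intro y hy
        have hylen : y.length = k + 1 := mem_allWords.mp hy
        rw [sum_wgt_disj p (allWords q k) (Del y)]
        have hDsub : Del y ⊆ allWords q k := by
          intro z hz
          have h1 := (Finset.mem_filter.mp hz).1
          rw [mem_allWords] at h1 ⊢
          rw [h1, hylen]
          omega
        rw [Finset.inter_eq_right.mpr hDsub]
        have hge : 1 + dsc y ≤ (Del y).card := by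
          cases y with
          | nil => simp at hylen
          | cons a w => exact card_del q w a
        calc (1 - p) ^ (Del y).card ≤ (1 - p) ^ (1 + dsc y) :=
              pow_le_pow_of_le_one h1p0 h1p1 hge
          _ = (1 - p) * (1 - p) ^ dsc y := by rw [pow_add, pow_one]
      calc (∑ y ∈ allWords q (k + 1), ∑ S ∈ (allWords q k).powerset,
              wgt p (allWords q k) S * (if Disjoint S (Del y) then (1 : ℝ) else 0))
          ≤ ∑ y ∈ allWords q (k + 1), (1 - p) * (1 - p) ^ dsc y :=
            Finset.sum_le_sum e2
        _ = (1 - p) * ∑ y ∈ allWords q (k + 1), (1 - p) ^ dsc y := by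
            rw [Finset.mul_sum]
        _ = (1 - p) * ((q : ℝ) * (1 + ((q : ℝ) - 1) * (1 - p)) ^ k) := by
            rw [sum_pow_dsc q hq1 (1 - p) k]
    -- combine
    have hclaim : (1 - u) ^ k ≤ 1 / 9 := by
      rw [hudef, hkdef]
      exact claimC n hn7
    have hu1 : (0 : ℝ) ≤ 1 - u := by
      rw [hudef]
      have h8 : (8 : ℝ) ≤ (n : ℝ) + 1 := by
        have : (7 : ℝ) ≤ (n : ℝ) := by exact_mod_cast hn7
        linarith
      have : 5 / ((n : ℝ) + 1) ≤ 5 / 8 := by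
        apply div_le_div_of_nonneg_left (by norm_num) (by norm_num) h8
      linarith
    have hEbound : p * ((q : ℝ) ^ k)
        + (7 / M) * ((1 - p) * ((q : ℝ) * (1 + ((q : ℝ) - 1) * (1 - p)) ^ k))
        ≤ 7 * (q : ℝ) ^ (k + 1) / N := by
      rw [hqu, mul_pow]
      have hqk0 : (0 : ℝ) ≤ (q : ℝ) ^ k := by positivity
      have hterm : (1 - p) * ((q : ℝ) * ((q : ℝ) ^ k * (1 - u) ^ k))
          ≤ (q : ℝ) ^ (k + 1) * (1 / 9) := by
        have s1 : (1 - p) * ((q : ℝ) * ((q : ℝ) ^ k * (1 - u) ^ k))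
            ≤ 1 * ((q : ℝ) * ((q : ℝ) ^ k * (1 - u) ^ k)) := by
          apply mul_le_mul_of_nonneg_right h1p1
          have hu2 : (0:ℝ) ≤ (1 - u)^k := pow_nonneg hu1 k
          have hq0 : (0:ℝ) ≤ (q:ℝ) := Nat.cast_nonneg _
          have hqk : (0:ℝ) ≤ (q:ℝ)^k := by positivity
          exact mul_nonneg hq0 (mul_nonneg hqk hu2)
        have s2 : (q : ℝ) * ((q : ℝ) ^ k * (1 - u) ^ k)
            ≤ (q : ℝ) * ((q : ℝ) ^ k * (1 / 9)) := by
          apply mul_le_mul_of_nonneg_left _ (by positivity)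
          exact mul_le_mul_of_nonneg_left hclaim hqk0
        have s3 : (q : ℝ) * ((q : ℝ) ^ k * (1 / 9)) = (q : ℝ) ^ (k + 1) * (1 / 9) := by
          rw [pow_succ]; ring
        linarith
      have hfinal : 5 * (q : ℝ) / A + 7 * (q : ℝ) / (9 * M) ≤ 7 * (q : ℝ) / N :=
        scalar_ineq (q : ℝ) A M N hqR hA7 hA14 (by rw [hNdef, hAdef]) hMpos hNM
      have hmul := mul_le_mul_of_nonneg_left hfinal hqk0
      have lhs_eq : (q : ℝ) ^ k * (5 * (q : ℝ) / A + 7 * (q : ℝ) / (9 * M))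
          = p * (q : ℝ) ^ k + (7 / M) * ((q : ℝ) ^ (k + 1) * (1 / 9)) := by
        rw [hpdef, pow_succ]
        ring
      have rhs_eq : (q : ℝ) ^ k * (7 * (q : ℝ) / N) = 7 * (q : ℝ) ^ (k + 1) / N := by
        rw [pow_succ]
        ring
      rw [lhs_eq, rhs_eq] at hmul
      have hmono : (7 / M) * ((1 - p) * ((q : ℝ) * ((q : ℝ) ^ k * (1 - u) ^ k)))
          ≤ (7 / M) * ((q : ℝ) ^ (k + 1) * (1 / 9)) :=
        mul_le_mul_of_nonneg_left hterm (div_nonneg (by norm_num) hMpos.le)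
      linarith
    -- expectation → existence
    have hsum_le : ∑ S ∈ (allWords q k).powerset, wgt p (allWords q k) S *
        ((S.card : ℝ) + 7 * (((allWords q (k + 1)).filter
          (fun y => ¬ ∃ s ∈ S, s.Sublist y)).card : ℝ) / M)
        ≤ 7 * (q : ℝ) ^ (k + 1) / N := by
      have split : ∀ S ∈ (allWords q k).powerset, wgt p (allWords q k) S *
          ((S.card : ℝ) + 7 * (((allWords q (k + 1)).filter
            (fun y => ¬ ∃ s ∈ S, s.Sublist y)).card : ℝ) / M)
          = wgt p (allWords q k) S * (S.card : ℝ)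
            + (7 / M) * (wgt p (allWords q k) S * (((allWords q (k + 1)).filter
              (fun y => ¬ ∃ s ∈ S, s.Sublist y)).card : ℝ)) := by
        intro S hS
        ring
      rw [Finset.sum_congr rfl split, Finset.sum_add_distrib, ← Finset.mul_sum]
      have hcardU : (((allWords q k).card : ℕ) : ℝ) = (q : ℝ) ^ k := by
        rw [card_allWords]; push_cast; ring
      have h1 : ∑ S ∈ (allWords q k).powerset, wgt p (allWords q k) S * (S.card : ℝ) = p * ((q : ℝ) ^ k) := by
        rw [sum_wgt_card, hcardU]
      have h2 : (7 / M) * (∑ S ∈ (allWords q k).powerset, wgt p (allWords q k) S * (((allWords q (k + 1)).filter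
          (fun y => ¬ ∃ s ∈ S, s.Sublist y)).card : ℝ))
          ≤ (7 / M) * ((1 - p) * ((q : ℝ) * (1 + ((q : ℝ) - 1) * (1 - p)) ^ k)) :=
        mul_le_mul_of_nonneg_left hTsum (div_nonneg (by norm_num) hMpos.le)
      rw [h1]
      linarith
    -- extract a good S
    have hsumB : ∑ S ∈ (allWords q k).powerset, wgt p (allWords q k) S * (7 * (q : ℝ) ^ (k + 1) / N)
        = 7 * (q : ℝ) ^ (k + 1) / N := by
      rw [← Finset.sum_mul, sum_wgt, one_mul]
    have hex : ∃ S ∈ (allWords q k).powerset, wgt p (allWords q k) S *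
        ((S.card : ℝ) + 7 * (((allWords q (k + 1)).filter
          (fun y => ¬ ∃ s ∈ S, s.Sublist y)).card : ℝ) / M)
        ≤ wgt p (allWords q k) S * (7 * (q : ℝ) ^ (k + 1) / N) := by
      apply Finset.exists_le_of_sum_le ⟨∅, Finset.empty_mem_powerset _⟩
      rw [hsumB]
      exact hsum_le
    obtain ⟨S, hSmem, hSle⟩ := hex
    have hwpos : 0 < wgt p (allWords q k) S :=
      mul_pos (pow_pos hppos _) (pow_pos h1ppos _)
    have hgood : (S.card : ℝ) + 7 * (((allWords q (k + 1)).filter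
        (fun y => ¬ ∃ s ∈ S, s.Sublist y)).card : ℝ) / M
        ≤ 7 * (q : ℝ) ^ (k + 1) / N :=
      le_of_mul_le_mul_left hSle hwpos
    rw [hMdef, hNdef] at hgood
    exact ⟨k, n2, hkn, S,
      fun s hs => mem_allWords.mp (Finset.mem_powerset.mp hSmem hs), hgood⟩
end

section
/- For all integers n ≥ R ≥ 1 and every real c > 0, there exists a set S ⊆ {0,1}^{n+R} with |S| ≤ c·2^{n+R}/C(n,R) such that the set T = {y ∈ {0,1}^n : y is not a subsequence of any s ∈ S} satisfies |T| ≤ e^{−c}·e^{V_I(n,R)/2^{n+R}}·2^n. -/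
open scoped Classical

/-- The finset of all binary words of length `n`, as lists over `Fin 2`. -/
def allBinWords (n : ℕ) : Finset (List (Fin 2)) :=
  (Finset.univ : Finset (Fin n → Fin 2)).image List.ofFn

lemma mem_allBinWords {n : ℕ} {z : List (Fin 2)} :
    z ∈ allBinWords n ↔ z.length = n := by
  simp only [allBinWords, Finset.mem_image, Finset.mem_univ, true_and]
  constructor
  · rintro ⟨v, rfl⟩; simp
  · rintro rfl; exact ⟨z.get, List.ofFn_get z⟩

lemma card_allBinWords (n : ℕ) : (allBinWords n).card = 2 ^ n := by
  rw [allBinWords, Finset.card_image_of_injective _ List.ofFn_injective, Finset.card_univ]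
  simp

lemma allBinWords_succ (n : ℕ) :
    allBinWords (n+1)
      = (allBinWords n).image (List.cons 0) ∪ (allBinWords n).image (List.cons 1) := by
  ext z
  simp only [Finset.mem_union, Finset.mem_image, mem_allBinWords]
  constructor
  · intro hz
    cases z with
    | nil => simp at hz
    | cons a w =>
      have hw : w.length = n := by simpa using hz
      fin_cases a
      · exact Or.inl ⟨w, hw, rfl⟩
      · exact Or.inr ⟨w, hw, rfl⟩
  · rintro (⟨w, hw, rfl⟩ | ⟨w, hw, rfl⟩) <;> simp [hw]

lemma cons_sublist_cons_ne {a b : Fin 2} (hab : a ≠ b) (t w : List (Fin 2)) :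
    (a :: t).Sublist (b :: w) ↔ (a :: t).Sublist w := by
  constructor
  · intro h
    cases h with
    | cons _ h => exact h
    | cons_cons => exact absurd rfl hab
  · exact fun h => h.cons b

lemma count_superseq_zero {N : ℕ} {y : List (Fin 2)} (h : N < y.length) :
    ((allBinWords N).filter (fun z => y.Sublist z)).card = 0 := by
  rw [Finset.card_eq_zero, Finset.filter_eq_empty_iff]
  intro z hz hsub
  have h1 := hsub.length_le
  rw [mem_allBinWords.mp hz] at h1
  omega

lemma pascal_sum (N k : ℕ) :
    ∑ i ∈ Finset.range (k+1), (N+1).choose i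
      = ∑ i ∈ Finset.range (k+1), N.choose i + ∑ i ∈ Finset.range k, N.choose i := by
  induction k with
  | zero => simp
  | succ k ih =>
    rw [Finset.sum_range_succ, ih, Nat.choose_succ_succ,
      Finset.sum_range_succ (f := fun i => N.choose i) (n := k + 1),
      Finset.sum_range_succ (f := fun i => N.choose i) (n := k)]
    ring

lemma count_superseq (N : ℕ) : ∀ y : List (Fin 2), y.length ≤ N →
    ((allBinWords N).filter (fun z => y.Sublist z)).card
      = ∑ i ∈ Finset.range (N - y.length + 1), N.choose i := by
  induction N with
  | zero =>
    intro y hy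
    have : y = [] := List.length_eq_zero_iff.mp (Nat.le_zero.mp hy)
    subst this
    rw [Finset.filter_true_of_mem (fun z _ => List.nil_sublist z)]
    simp [card_allBinWords]
  | succ N ih =>
    intro y hy
    cases y with
    | nil =>
      rw [Finset.filter_true_of_mem (fun z _ => List.nil_sublist z)]
      simp [card_allBinWords, Nat.sum_range_choose]
    | cons a t =>
      have ht : t.length ≤ N := by simpa using hy
      have haux : ∀ b : Fin 2,
          ((allBinWords N).filter (fun w => (b :: t).Sublist w)).card
            = ∑ i ∈ Finset.range (N - t.length), N.choose i := by
        intro b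
        rcases eq_or_lt_of_le ht with h | h
        · rw [count_superseq_zero (by simp [h])]
          rw [h, Nat.sub_self]
          simp
        · rw [ih (b :: t) (by simpa using h),
            show N - (b :: t).length + 1 = N - t.length from by
              simp only [List.length_cons]; omega]
      have hbranch : ∀ b : Fin 2,
          (((allBinWords N).image (List.cons b)).filter (fun z => (a :: t).Sublist z)).card
            = if a = b then ∑ i ∈ Finset.range (N - t.length + 1), N.choose i
              else ∑ i ∈ Finset.range (N - t.length), N.choose i := by
        intro b
        rw [Finset.filter_image, Finset.card_image_of_injective _ (List.cons_injective)]
        by_cases hab : a = b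
        · subst hab
          simp only [if_pos rfl]
          rw [← ih t ht]
          congr 1
          ext w
          simp [List.cons_sublist_cons]
        · rw [if_neg hab, ← haux a]
          congr 1
          ext w
          simp [cons_sublist_cons_ne hab]
      have hdisj : Disjoint ((allBinWords N).image (List.cons (0 : Fin 2)))
          ((allBinWords N).image (List.cons 1)) := by
        rw [Finset.disjoint_left]
        rintro z hz0 hz1
        simp only [Finset.mem_image] at hz0 hz1
        obtain ⟨w0, -, h0⟩ := hz0
        obtain ⟨w1, -, h1⟩ := hz1
        rw [← h1] at h0
        exact absurd (List.head_eq_of_cons_eq h0) (by decide)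
      rw [allBinWords_succ, Finset.filter_union,
        Finset.card_union_of_disjoint (Finset.disjoint_filter_filter hdisj),
        hbranch 0, hbranch 1]
      have hk : N + 1 - (a :: t).length + 1 = N - t.length + 1 := by
        simp only [List.length_cons]; omega
      rw [hk, pascal_sum]
      fin_cases a <;> simp <;> ring

lemma card_pi_filter {α : Type*} [Fintype α] (m : ℕ) (P : α → Prop) :
    (Finset.univ.filter (fun g : Fin m → α => ∀ i, P (g i))).card
      = (Finset.univ.filter P).card ^ m := by
  classical
  rw [← Fintype.card_subtype, ← Fintype.card_subtype,
    Fintype.card_congr (Equiv.subtypePiEquivPi (p := fun _ : Fin m => P))]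
  simp

lemma count_not_superseq {n R : ℕ} {y : List (Fin 2)} (hy : y.length = n) :
    Fintype.card {v : Fin (n+R) → Fin 2 // ¬ y.Sublist (List.ofFn v)}
      = 2 ^ (n+R) - ∑ i ∈ Finset.range (R+1), (n+R).choose i := by
  classical
  rw [Fintype.card_subtype]
  have h1 : (Finset.univ.filter (fun v : Fin (n+R) → Fin 2 => y.Sublist (List.ofFn v))).card
      = ∑ i ∈ Finset.range (R+1), (n+R).choose i := by
    have h2 : ((allBinWords (n+R)).filter (fun z => y.Sublist z)).card
        = ∑ i ∈ Finset.range (R+1), (n+R).choose i := by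
      rw [count_superseq (n+R) y (by omega), hy, Nat.add_sub_cancel_left]
    rw [← h2, allBinWords, Finset.filter_image,
      Finset.card_image_of_injective _ List.ofFn_injective]
  have h3 := Finset.card_filter_add_card_filter_not
      (s := (Finset.univ : Finset (Fin (n+R) → Fin 2)))
      (p := fun v => y.Sublist (List.ofFn v))
  have h4 : (Finset.univ : Finset (Fin (n+R) → Fin 2)).card = 2 ^ (n+R) := by
    rw [Finset.card_univ]; simp
  omega

set_option maxHeartbeats 2000000 in
/-- Existence of small almost-covering sets for `R` deletions: for `n ≥ R ≥ 1`
and `c > 0` there is a set `S ⊆ {0,1}^(n+R)` of size at most `c·2^(n+R)/C(n,R)`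
whose set `T` of words of `{0,1}^n` that are not a subsequence of any `s ∈ S`
satisfies `|T| ≤ e^(-c)·e^(V_I(n,R)/2^(n+R))·2^n`, where
`V_I(n,R) = ∑_{i=0}^R C(n+R,i)`. -/
theorem exists_almost_covering_R_deletions (n R : ℕ) (hR : 1 ≤ R) (hnR : R ≤ n)
    (c : ℝ) (hc : 0 < c) :
    ∃ S : Finset (List (Fin 2)),
      (∀ s ∈ S, s.length = n + R) ∧
      (S.card : ℝ) ≤ c * 2 ^ (n + R) / (n.choose R : ℝ) ∧
      (((allBinWords n).filter (fun y => ¬ ∃ s ∈ S, y.Sublist s)).card : ℝ)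
        ≤ Real.exp (-c) *
            Real.exp ((∑ i ∈ Finset.range (R + 1), ((n + R).choose i : ℝ)) / 2 ^ (n + R)) *
            2 ^ n := by
  classical
  set V : ℕ := ∑ i ∈ Finset.range (R+1), (n+R).choose i with hVdef
  set K : ℕ := n.choose R with hKdef
  have hKpos : 0 < K := Nat.choose_pos hnR
  have hKV : K ≤ V := by
    calc K ≤ (n+R).choose R := Nat.choose_le_choose R (by omega)
    _ ≤ V := Finset.single_le_sum (f := fun i => (n+R).choose i)
        (fun i _ => Nat.zero_le _) (Finset.mem_range.mpr (by omega))
  have hV2 : V ≤ 2 ^ (n+R) := by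
    calc V ≤ ∑ i ∈ Finset.range (n+R+1), (n+R).choose i :=
        Finset.sum_le_sum_of_subset (Finset.range_subset_range.mpr (by omega))
    _ = 2 ^ (n+R) := Nat.sum_range_choose (n+R)
  have hVpos : 0 < V := lt_of_lt_of_le hKpos hKV
  set m := ⌊c * 2 ^ (n+R) / (K : ℝ)⌋₊ with hmdef
  set B : ℕ := 2 ^ (n+R) - V with hBdef
  -- the count of "bad" tuples per word
  have hbadcount : ∀ y ∈ allBinWords n,
      (Finset.univ.filter (fun g : Fin m → (Fin (n+R) → Fin 2) =>
        ∀ i, ¬ y.Sublist (List.ofFn (g i)))).card = B ^ m := by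
    intro y hy
    have h1 : (Finset.univ.filter (fun g : Fin m → (Fin (n+R) → Fin 2) =>
        ∀ i, ¬ y.Sublist (List.ofFn (g i)))).card
        = Fintype.card {v : Fin (n+R) → Fin 2 // ¬ y.Sublist (List.ofFn v)} ^ m := by
      rw [← Fintype.card_subtype,
        Fintype.card_congr (Equiv.subtypePiEquivPi
          (β := fun _ : Fin m => Fin (n+R) → Fin 2)
          (p := fun _ (v : Fin (n+R) → Fin 2) => ¬ y.Sublist (List.ofFn v)))]
      simp
    rw [h1, count_not_superseq (R := R) (mem_allBinWords.mp hy)]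
  -- the set T of uncovered words, for a tuple g
  have hsumN : ∑ g : Fin m → (Fin (n+R) → Fin 2),
      ((allBinWords n).filter (fun y => ¬ ∃ s ∈
        Finset.image (fun i => List.ofFn (g i)) Finset.univ, y.Sublist s)).card
      = 2 ^ n * B ^ m := by
    have hstep : ∀ g : Fin m → (Fin (n+R) → Fin 2),
        ((allBinWords n).filter (fun y => ¬ ∃ s ∈
          Finset.image (fun i => List.ofFn (g i)) Finset.univ, y.Sublist s)).card
        = ∑ y ∈ allBinWords n,
            if (∀ i, ¬ y.Sublist (List.ofFn (g i))) then 1 else 0 := by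
      intro g
      rw [Finset.card_filter]
      refine Finset.sum_congr rfl (fun y _ => ?_)
      have hiff : (¬ ∃ s ∈ Finset.image (fun i => List.ofFn (g i)) Finset.univ, y.Sublist s)
          ↔ ∀ i, ¬ y.Sublist (List.ofFn (g i)) := by simp
      simp only [hiff]
    have e1 : (∑ g : Fin m → (Fin (n+R) → Fin 2),
        ((allBinWords n).filter (fun y => ¬ ∃ s ∈
          Finset.image (fun i => List.ofFn (g i)) Finset.univ, y.Sublist s)).card)
        = ∑ g : Fin m → (Fin (n+R) → Fin 2), ∑ y ∈ allBinWords n,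
            if (∀ i, ¬ y.Sublist (List.ofFn (g i))) then 1 else 0 :=
      Finset.sum_congr rfl (fun g _ => hstep g)
    have e2 : ∀ y ∈ allBinWords n,
        (∑ g : Fin m → (Fin (n+R) → Fin 2),
          if (∀ i, ¬ y.Sublist (List.ofFn (g i))) then 1 else 0) = B ^ m := by
      intro y hy
      rw [← Finset.card_filter]
      exact hbadcount y hy
    rw [e1, Finset.sum_comm, Finset.sum_congr rfl e2, Finset.sum_const,
      card_allBinWords, smul_eq_mul]
  -- extract a good tuple by averaging
  have hcardG : (Fintype.card (Fin m → (Fin (n+R) → Fin 2)) : ℝ) = ((2:ℝ) ^ (n+R)) ^ m := by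
    simp
  have havg : ∑ g : Fin m → (Fin (n+R) → Fin 2),
      ((((allBinWords n).filter (fun y => ¬ ∃ s ∈
        Finset.image (fun i => List.ofFn (g i)) Finset.univ, y.Sublist s)).card : ℕ) : ℝ)
      ≤ ∑ _g : Fin m → (Fin (n+R) → Fin 2),
          ((2:ℝ) ^ n * (B : ℝ) ^ m / ((2:ℝ) ^ (n+R)) ^ m) := by
    rw [Finset.sum_const, nsmul_eq_mul, Finset.card_univ, hcardG]
    have h2 : ((2:ℝ) ^ (n+R)) ^ m ≠ 0 := by positivity
    rw [mul_div_assoc', mul_comm, mul_div_assoc, div_self h2, mul_one]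
    rw [← Nat.cast_sum, hsumN]
    push_cast
    ring_nf
    exact le_refl _
  obtain ⟨g, -, hg⟩ := Finset.exists_le_of_sum_le Finset.univ_nonempty havg
  refine ⟨Finset.image (fun i => List.ofFn (g i)) Finset.univ, ?_, ?_, ?_⟩
  · intro s hs
    obtain ⟨i, -, rfl⟩ := Finset.mem_image.mp hs
    simp
  · calc ((Finset.image (fun i => List.ofFn (g i)) Finset.univ).card : ℝ)
        ≤ ((Finset.univ : Finset (Fin m)).card : ℝ) := by
          exact_mod_cast Finset.card_image_le
    _ = (m : ℝ) := by simp
    _ ≤ c * 2 ^ (n + R) / (K : ℝ) := Nat.floor_le (by positivity)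
  · -- final analytic chain
    set p : ℝ := (V : ℝ) / 2 ^ (n+R) with hpdef
    have h2Npos : (0:ℝ) < 2 ^ (n+R) := by positivity
    have hppos : 0 < p := by
      rw [hpdef]
      have : (0:ℝ) < (V:ℝ) := by exact_mod_cast hVpos
      positivity
    have hple : p ≤ 1 := by
      rw [hpdef, div_le_one h2Npos]
      exact_mod_cast hV2
    have hBcast : (B : ℝ) = 2 ^ (n+R) - (V:ℝ) := by
      rw [hBdef]
      push_cast [hV2]
      ring
    have hBp : (B : ℝ) / 2 ^ (n+R) = 1 - p := by
      rw [hBcast, sub_div, div_self h2Npos.ne', hpdef]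
    have hchain1 : (2:ℝ) ^ n * (B : ℝ) ^ m / ((2:ℝ) ^ (n+R)) ^ m
        = 2 ^ n * (1 - p) ^ m := by
      rw [mul_div_assoc, ← div_pow, hBp]
    have h1p : 1 - p ≤ Real.exp (-p) := by
      have := Real.add_one_le_exp (-p)
      linarith
    have hpow : (1 - p) ^ m ≤ Real.exp (-p) ^ m :=
      pow_le_pow_left₀ (by linarith) h1p m
    have hexp1 : Real.exp (-p) ^ m = Real.exp ((m:ℝ) * (-p)) :=
      (Real.exp_nat_mul (-p) m).symm
    have hmc : c ≤ p * ((m:ℝ) + 1) := by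
      have hA : c * 2 ^ (n+R) / (K:ℝ) < (m:ℝ) + 1 := Nat.lt_floor_add_one _
      have hKR : (0:ℝ) < (K:ℝ) := by exact_mod_cast hKpos
      have h1 : c * 2 ^ (n+R) / (K:ℝ) * p ≤ ((m:ℝ) + 1) * p :=
        mul_le_mul_of_nonneg_right hA.le hppos.le
      have h2 : c * 2 ^ (n+R) / (K:ℝ) * p = c * (V:ℝ) / (K:ℝ) := by
        rw [hpdef]
        field_simp
      have h3 : c ≤ c * (V:ℝ) / (K:ℝ) := by
        rw [le_div_iff₀ hKR]
        have : (K:ℝ) ≤ (V:ℝ) := by exact_mod_cast hKV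
        nlinarith
      calc c ≤ c * (V:ℝ) / (K:ℝ) := h3
      _ = c * 2 ^ (n+R) / (K:ℝ) * p := h2.symm
      _ ≤ ((m:ℝ) + 1) * p := h1
      _ = p * ((m:ℝ) + 1) := by ring
    have hexp2 : Real.exp ((m:ℝ) * (-p)) ≤ Real.exp (p - c) := by
      rw [Real.exp_le_exp]
      nlinarith
    have hVsum : (∑ i ∈ Finset.range (R + 1), ((n + R).choose i : ℝ)) = (V : ℝ) := by
      rw [hVdef]
      push_cast
      ring
    have hRHS : Real.exp (-c) *
        Real.exp ((∑ i ∈ Finset.range (R + 1), ((n + R).choose i : ℝ)) / 2 ^ (n + R)) * 2 ^ n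
        = Real.exp (p - c) * 2 ^ n := by
      rw [hVsum, ← hpdef, ← Real.exp_add]
      ring_nf
    rw [hRHS]
    calc (((allBinWords n).filter (fun y => ¬ ∃ s ∈
          Finset.image (fun i => List.ofFn (g i)) Finset.univ, y.Sublist s)).card : ℝ)
        ≤ 2 ^ n * (B : ℝ) ^ m / ((2:ℝ) ^ (n+R)) ^ m := hg
    _ = 2 ^ n * (1 - p) ^ m := hchain1
    _ ≤ 2 ^ n * Real.exp (-p) ^ m := by
        have h2n : (0:ℝ) ≤ 2 ^ n := by positivity
        exact mul_le_mul_of_nonneg_left hpow h2n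
    _ = 2 ^ n * Real.exp ((m:ℝ) * (-p)) := by rw [hexp1]
    _ ≤ 2 ^ n * Real.exp (p - c) := by
        have h2n : (0:ℝ) ≤ 2 ^ n := by positivity
        exact mul_le_mul_of_nonneg_left hexp2 h2n
    _ = Real.exp (p - c) * 2 ^ n := by ring
end
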